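/- Let Z_{0,z}(τ ≥ k) denote the polymer partition function restricted to up-right paths from 0 to z whose exit time τ is at least k, i.e., paths whose first k steps are all e_1 steps. For z ∈ ℤ²_{≥0} and integers 0 ≤ l ≤ k (with the relevant quantities positive), Z_{0,z}(τ ≥ l)/Z_{0,z-e_1}(τ ≥ l) ≤ Z_{0,z}(τ ≥ k)/Z_{0,z-e_1}(τ ≥ k) and Z_{0,z}(τ ≥ l)/Z_{0,z-e_2}(τ ≥ l) ≥ Z_{0,z}(τ ≥ k)/Z_{0,z-e_2}(τ ≥ k). -/
import Mathlib


/-- The `j`-th vertex of the up-right path started at `u` whose `i`-th step is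
`e₁` if `σ i = true` and `e₂` if `σ i = false`. -/
def pathVertex (u : ℤ × ℤ) (σ : ℕ → Bool) (j : ℕ) : ℤ × ℤ :=
  (u.1 + ((Finset.range j).filter fun i => σ i = true).card,
   u.2 + ((Finset.range j).filter fun i => σ i = false).card)

/-- The polymer partition function `Z_{u,v}` over up-right paths from `u` to `v`. -/
noncomputable def Zfun (Y : ℤ × ℤ → ℝ) (u v : ℤ × ℤ) : ℝ :=
  if u.1 ≤ v.1 ∧ u.2 ≤ v.2 then
    ∑ σ : Fin ((v.1 - u.1).toNat + (v.2 - u.2).toNat) → Bool,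
      (if (Finset.univ.filter fun i => σ i = true).card = (v.1 - u.1).toNat then
        ∏ j ∈ Finset.range ((v.1 - u.1).toNat + (v.2 - u.2).toNat + 1),
          Y (pathVertex u
              (fun i => if h : i < (v.1 - u.1).toNat + (v.2 - u.2).toNat then σ ⟨i, h⟩
                        else false) j)
      else 0)
  else 0

/-- The restricted partition function `Z_{0,z}(τ ≥ k)`: the sum over up-right paths
from `0` to `z` whose first `k` steps are all `e₁` steps. -/
noncomputable def ZExit (Y : ℤ × ℤ → ℝ) (z : ℤ × ℤ) (k : ℕ) : ℝ :=
  if 0 ≤ z.1 ∧ 0 ≤ z.2 then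
    ∑ σ : Fin (z.1.toNat + z.2.toNat) → Bool,
      (if (Finset.univ.filter fun i => σ i = true).card = z.1.toNat ∧
          (∀ i : Fin (z.1.toNat + z.2.toNat), (i : ℕ) < k → σ i = true) then
        ∏ j ∈ Finset.range (z.1.toNat + z.2.toNat + 1),
          Y (pathVertex 0
              (fun i => if h : i < z.1.toNat + z.2.toNat then σ ⟨i, h⟩ else false) j)
      else 0)
  else 0

section Aux
open Finset

def extB (n : ℕ) (σ : Fin n → Bool) : ℕ → Bool := fun i => if h : i < n then σ ⟨i, h⟩ else false

lemma extB_coe {n : ℕ} (σ : Fin n → Bool) (i : Fin n) : extB n σ i = σ i := by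
  simp [extB, i.isLt]

lemma pathVertex_congr (u : ℤ × ℤ) (f g : ℕ → Bool) (j : ℕ) (h : ∀ i < j, f i = g i) :
    pathVertex u f j = pathVertex u g j := by
  unfold pathVertex
  have h1 : (Finset.range j).filter (fun i => f i = true)
      = (Finset.range j).filter (fun i => g i = true) :=
    filter_congr (fun i hi => by rw [h i (mem_range.mp hi)])
  have h2 : (Finset.range j).filter (fun i => f i = false)
      = (Finset.range j).filter (fun i => g i = false) :=
    filter_congr (fun i hi => by rw [h i (mem_range.mp hi)])
  rw [h1, h2]

lemma card_filter_range_extB {n : ℕ} (σ : Fin n → Bool) (c : Bool) :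
    ((Finset.range n).filter fun i => extB n σ i = c).card
      = (Finset.univ.filter fun i : Fin n => σ i = c).card := by
  rw [Finset.card_filter, Finset.card_filter, ← Fin.sum_univ_eq_sum_range
    (fun i => if extB n σ i = c then 1 else 0) n]
  exact Finset.sum_congr rfl fun i _ => by rw [extB_coe]

lemma card_filter_false {n : ℕ} (σ : Fin n → Bool) :
    (Finset.univ.filter fun i : Fin n => σ i = false).card
      = n - (Finset.univ.filter fun i : Fin n => σ i = true).card := by
  have h := Finset.card_filter_add_card_filter_not (s := (univ : Finset (Fin n)))
    (fun i => σ i = true)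
  have h2 : (univ.filter fun i : Fin n => ¬ σ i = true) = univ.filter fun i : Fin n => σ i = false := by
    apply filter_congr; intro i _; cases σ i <;> simp
  rw [h2] at h
  simp only [Finset.card_univ, Fintype.card_fin] at h
  omega

lemma pathVertex_extB_last {n : ℕ} (σ : Fin n → Bool) (a : ℕ)
    (hc : (Finset.univ.filter fun i : Fin n => σ i = true).card = a) :
    pathVertex 0 (extB n σ) n = ((a : ℤ), ((n - a : ℕ) : ℤ)) := by
  unfold pathVertex
  rw [card_filter_range_extB, card_filter_range_extB, hc, card_filter_false, hc]
  simp

lemma card_univ_filter_lt (n a : ℕ) (h : a ≤ n) :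
    (Finset.univ.filter fun i : Fin n => (i : ℕ) < a).card = a := by
  rw [Finset.card_filter, Fin.sum_univ_eq_sum_range (fun i => if i < a then 1 else 0) n,
    ← Finset.card_filter]
  have : (Finset.range n).filter (fun i => i < a) = Finset.range a := by
    ext i; simp only [mem_filter, mem_range]; omega
  rw [this, card_range]

lemma card_filter_snoc {m : ℕ} (σ : Fin m → Bool) (s : Bool) :
    (Finset.univ.filter fun i : Fin (m + 1) => Fin.snoc (α := fun _ => Bool) σ s i = true).card
      = (Finset.univ.filter fun i : Fin m => σ i = true).card + (if s = true then 1 else 0) := by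
  rw [Finset.card_filter, Fin.sum_univ_castSucc]
  simp only [Fin.snoc_castSucc, Fin.snoc_last, ← Finset.card_filter]

lemma forall_snoc {m k : ℕ} (σ : Fin m → Bool) (s : Bool) (hk : k ≤ m) :
    (∀ i : Fin (m + 1), (i : ℕ) < k → Fin.snoc (α := fun _ => Bool) σ s i = true)
      ↔ (∀ i : Fin m, (i : ℕ) < k → σ i = true) := by
  constructor
  · intro h i hi
    have := h i.castSucc (by rwa [Fin.coe_castSucc])
    rwa [Fin.snoc_castSucc] at this
  · intro h i hi
    have hlt : (i : ℕ) < m := by omega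
    have hi2 : i = (⟨(i : ℕ), hlt⟩ : Fin m).castSucc := by
      apply Fin.ext; simp
    rw [hi2, Fin.snoc_castSucc]
    exact h _ hi

lemma extB_snoc_lt {m : ℕ} (σ : Fin m → Bool) (s : Bool) {i : ℕ} (hi : i < m) :
    extB (m + 1) (Fin.snoc (α := fun _ => Bool) σ s) i = extB m σ i := by
  simp only [extB, dif_pos hi, dif_pos (Nat.lt_succ_of_lt hi)]
  have : (⟨i, Nat.lt_succ_of_lt hi⟩ : Fin (m + 1)) = (⟨i, hi⟩ : Fin m).castSucc := by
    apply Fin.ext; simp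
  rw [this, Fin.snoc_castSucc]

lemma ZExit_eval (Y : ℤ × ℤ → ℝ) (z : ℤ × ℤ) (k : ℕ) (h1 : 0 ≤ z.1) (h2 : 0 ≤ z.2)
    (n a : ℕ) (hn : z.1.toNat + z.2.toNat = n) (ha : z.1.toNat = a) :
    ZExit Y z k = ∑ σ : Fin n → Bool,
      (if (Finset.univ.filter fun i => σ i = true).card = a ∧
          (∀ i : Fin n, (i : ℕ) < k → σ i = true) then
        ∏ j ∈ Finset.range (n + 1), Y (pathVertex 0 (extB n σ) j)
      else 0) := by
  subst hn ha
  rw [ZExit, if_pos ⟨h1, h2⟩]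
  rfl

lemma step_eq (Y : ℤ × ℤ → ℝ) (m a b k : ℕ) (σ' : Fin m → Bool) (s : Bool)
    (hm : a + b = m + 1) (ha : 1 ≤ a) (hb : 1 ≤ b) (hk : k ≤ m) (a' : ℕ)
    (ha' : a' + (if s = true then 1 else 0) = a) :
    (if (Finset.univ.filter fun i : Fin (m + 1) =>
            Fin.snoc (α := fun _ => Bool) σ' s i = true).card = a ∧
        (∀ i : Fin (m + 1), (i : ℕ) < k → Fin.snoc (α := fun _ => Bool) σ' s i = true) then
      ∏ j ∈ Finset.range (m + 1 + 1),
        Y (pathVertex 0 (extB (m + 1) (Fin.snoc (α := fun _ => Bool) σ' s)) j)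
    else 0)
      = Y ((a : ℤ), (b : ℤ)) *
        (if (Finset.univ.filter fun i : Fin m => σ' i = true).card = a' ∧
            (∀ i : Fin m, (i : ℕ) < k → σ' i = true) then
          ∏ j ∈ Finset.range (m + 1), Y (pathVertex 0 (extB m σ') j)
        else 0) := by
  by_cases hC : (Finset.univ.filter fun i : Fin m => σ' i = true).card = a' ∧
      (∀ i : Fin m, (i : ℕ) < k → σ' i = true)
  · rw [if_pos hC, if_pos ⟨by rw [card_filter_snoc]; omega, (forall_snoc σ' s hk).mpr hC.2⟩]
    rw [Finset.prod_range_succ]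
    have h1 : ∏ j ∈ Finset.range (m + 1),
        Y (pathVertex 0 (extB (m + 1) (Fin.snoc (α := fun _ => Bool) σ' s)) j)
        = ∏ j ∈ Finset.range (m + 1), Y (pathVertex 0 (extB m σ') j) := by
      refine Finset.prod_congr rfl fun j hj => ?_
      have hj' : j ≤ m := by have := Finset.mem_range.mp hj; omega
      exact congrArg Y (pathVertex_congr 0 _ _ j
        (fun i hi => extB_snoc_lt σ' s (lt_of_lt_of_le hi hj')))
    have h2 : pathVertex 0 (extB (m + 1) (Fin.snoc (α := fun _ => Bool) σ' s)) (m + 1)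
        = ((a : ℤ), (b : ℤ)) := by
      rw [pathVertex_extB_last (Fin.snoc (α := fun _ => Bool) σ' s) a
        (by rw [card_filter_snoc]; omega)]
      have hab : m + 1 - a = b := by omega
      rw [hab]
    rw [h1, h2, mul_comm]
  · rw [if_neg hC, if_neg, mul_zero]
    rintro ⟨hc1, hc2⟩
    rw [card_filter_snoc] at hc1
    exact hC ⟨by omega, (forall_snoc σ' s hk).mp hc2⟩

lemma ZExit_rec (Y : ℤ × ℤ → ℝ) (a b k : ℕ) (ha : 1 ≤ a) (hb : 1 ≤ b) (hk : k < a + b) :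
    ZExit Y ((a : ℤ), (b : ℤ)) k
      = Y ((a : ℤ), (b : ℤ)) *
        (ZExit Y ((a : ℤ) - 1, (b : ℤ)) k + ZExit Y ((a : ℤ), (b : ℤ) - 1) k) := by
  obtain ⟨m, hm⟩ : ∃ m, a + b = m + 1 := ⟨a + b - 1, by omega⟩
  have hk' : k ≤ m := by omega
  rw [ZExit_eval Y _ k (by simp) (by simp) (m + 1) a (by simp; try omega) (by simp),
      ZExit_eval Y _ k (by simp; try omega) (by simp) m (a - 1) (by simp; try omega) (by simp; try omega),
      ZExit_eval Y _ k (by simp) (by simp; try omega) m a (by simp; try omega) (by simp)]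
  rw [← Equiv.sum_comp (Fin.snocEquiv (fun _ : Fin (m + 1) => Bool)), Fintype.sum_prod_type,
    Fintype.sum_bool, mul_add, Finset.mul_sum, Finset.mul_sum]
  congr 1
  · refine Finset.sum_congr rfl fun σ' _ => ?_
    have hfun : (Fin.snocEquiv (fun _ : Fin (m + 1) => Bool)) (true, σ')
        = Fin.snoc (α := fun _ => Bool) σ' true := rfl
    rw [hfun]
    exact step_eq Y m a b k σ' true hm ha hb hk' (a - 1) (by simp; try omega)
  · refine Finset.sum_congr rfl fun σ' _ => ?_
    have hfun : (Fin.snocEquiv (fun _ : Fin (m + 1) => Bool)) (false, σ')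
        = Fin.snoc (α := fun _ => Bool) σ' false := rfl
    rw [hfun]
    exact step_eq Y m a b k σ' false hm ha hb hk' a (by simp)

section
variable (Y : ℤ × ℤ → ℝ) (hY : ∀ z, 0 < Y z)

include hY

lemma ZExit_nonneg (z : ℤ × ℤ) (k : ℕ) : 0 ≤ ZExit Y z k := by
  unfold ZExit
  split
  · refine Finset.sum_nonneg fun σ _ => ?_
    split
    · exact Finset.prod_nonneg fun j _ => (hY _).le
    · exact le_refl 0
  · exact le_refl 0

lemma ZExit_anti (z : ℤ × ℤ) {k l : ℕ} (hlk : l ≤ k) : ZExit Y z k ≤ ZExit Y z l := by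
  unfold ZExit
  split
  · refine Finset.sum_le_sum fun σ _ => ?_
    by_cases h : (Finset.univ.filter fun i => σ i = true).card = z.1.toNat ∧
        (∀ i : Fin (z.1.toNat + z.2.toNat), (i : ℕ) < k → σ i = true)
    · rw [if_pos h, if_pos ⟨h.1, fun i hi => h.2 i (hi.trans_le hlk)⟩]
    · rw [if_neg h]
      split
      · exact Finset.prod_nonneg fun j _ => (hY _).le
      · exact le_refl 0
  · exact le_refl 0

lemma ZExit_pos (z : ℤ × ℤ) (k : ℕ) (h1 : 0 ≤ z.1) (h2 : 0 ≤ z.2) (hk : (k : ℤ) ≤ z.1) :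
    0 < ZExit Y z k := by
  unfold ZExit
  rw [if_pos ⟨h1, h2⟩]
  set n := z.1.toNat + z.2.toNat with hn
  have hk' : k ≤ z.1.toNat := by omega
  refine Finset.sum_pos' (fun σ _ => ?_) ⟨fun i => decide ((i : ℕ) < z.1.toNat),
    Finset.mem_univ _, ?_⟩
  · split
    · exact Finset.prod_nonneg fun j _ => (hY _).le
    · exact le_refl 0
  · rw [if_pos ?_]
    · exact Finset.prod_pos fun j _ => hY _
    constructor
    · have : (Finset.univ.filter fun i : Fin n => decide ((i : ℕ) < z.1.toNat) = true)
          = Finset.univ.filter fun i : Fin n => (i : ℕ) < z.1.toNat := by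
        apply filter_congr; intro i _; simp
      rw [this, card_univ_filter_lt n _ (by omega)]
    · intro i hi
      simp only [decide_eq_true_eq]
      omega

omit hY in
lemma ZExit_eq_zero (z : ℤ × ℤ) (k : ℕ) (h1 : 0 ≤ z.1) (h2 : 1 ≤ z.2) (hk : z.1 < (k : ℤ)) :
    ZExit Y z k = 0 := by
  unfold ZExit
  rw [if_pos ⟨h1, by omega⟩]
  refine Finset.sum_eq_zero fun σ _ => ?_
  rw [if_neg]
  rintro ⟨hc, hall⟩
  have hsub : (Finset.univ.filter fun i : Fin (z.1.toNat + z.2.toNat) => (i : ℕ) < z.1.toNat + 1)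
      ⊆ Finset.univ.filter fun i => σ i = true := by
    intro i hi
    simp only [mem_filter, mem_univ, true_and] at hi ⊢
    exact hall i (by omega)
  have hcard := Finset.card_le_card hsub
  rw [card_univ_filter_lt _ _ (by omega), hc] at hcard
  omega

omit hY in
lemma ZExit_horiz (z : ℤ × ℤ) (k : ℕ) (h1 : 0 ≤ z.1) (h2 : z.2 = 0) :
    ZExit Y z k = ZExit Y z 0 := by
  unfold ZExit
  rw [if_pos ⟨h1, by omega⟩, if_pos ⟨h1, by omega⟩]
  refine Finset.sum_congr rfl fun σ _ => ?_
  have hn : z.1.toNat + z.2.toNat = z.1.toNat := by omega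
  by_cases hc : (Finset.univ.filter fun i => σ i = true).card = z.1.toNat
  · have hall : ∀ i : Fin (z.1.toNat + z.2.toNat), (i : ℕ) < k → σ i = true := by
      have huniv : (Finset.univ.filter fun i => σ i = true) = Finset.univ := by
        apply Finset.eq_univ_of_card
        rw [hc]; simp [hn]
      rw [Finset.eq_univ_iff_forall] at huniv
      intro i _
      simpa using huniv i
    rw [if_pos ⟨hc, hall⟩, if_pos ⟨hc, fun i hi => absurd hi (by omega)⟩]
  · rw [if_neg (fun h => hc h.1), if_neg (fun h => hc h.1)]

lemma core :
    ∀ N a b k l : ℕ, a + b ≤ N → l ≤ k → k + 1 ≤ a →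
    ZExit Y ((a : ℤ), (b : ℤ)) l * ZExit Y ((a : ℤ) - 1, (b : ℤ) + 1) k
      ≤ ZExit Y ((a : ℤ), (b : ℤ)) k * ZExit Y ((a : ℤ) - 1, (b : ℤ) + 1) l := by
  intro N
  induction N with
  | zero => intro a b k l hab hlk hka; omega
  | succ N ih =>
    intro a b k l hab hlk hka
    by_cases hb0 : b = 0
    · subst hb0
      have hbz : (((0:ℕ):ℤ)) = 0 := by norm_num
      have h1 : ZExit Y ((a:ℤ), ((0:ℕ):ℤ)) l = ZExit Y ((a:ℤ), ((0:ℕ):ℤ)) 0 :=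
        ZExit_horiz Y _ l (by simp) (by simp)
      have h2 : ZExit Y ((a:ℤ), ((0:ℕ):ℤ)) k = ZExit Y ((a:ℤ), ((0:ℕ):ℤ)) 0 :=
        ZExit_horiz Y _ k (by simp) (by simp)
      rw [h1, h2]
      exact mul_le_mul_of_nonneg_left (ZExit_anti Y hY _ hlk) (ZExit_nonneg Y hY _ _)
    · by_cases hk0 : k = 0
      · have hl0 : l = 0 := by omega
        subst hk0 hl0
        exact le_rfl
      -- now b ≥ 1, k ≥ 1, a ≥ 2
      have hb1 : 1 ≤ b := by omega
      have ha2 : 2 ≤ a := by omega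
      have c1 : ((a - 1 : ℕ) : ℤ) = (a:ℤ) - 1 := by omega
      have c2 : ((b + 1 : ℕ) : ℤ) = (b:ℤ) + 1 := by push_cast; ring
      have c3 : ((b - 1 : ℕ) : ℤ) = (b:ℤ) - 1 := by omega
      have c5 : ((b - 1 : ℕ) : ℤ) + 1 = (b:ℤ) := by omega
      have c6 : ((b:ℤ)) + 1 - 1 = (b:ℤ) := by ring
      -- recursions
      have hrpl := ZExit_rec Y a b l (by omega) (by omega) (by omega)
      have hrpk := ZExit_rec Y a b k (by omega) (by omega) (by omega)
      have hrql := ZExit_rec Y (a-1) (b+1) l (by omega) (by omega) (by omega)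
      have hrqk := ZExit_rec Y (a-1) (b+1) k (by omega) (by omega) (by omega)
      rw [c1, c2, c6] at hrql hrqk
      -- IH1 : P_l * M_k ≤ P_k * M_l
      have IH1 := ih a (b-1) k l (by omega) hlk hka
      rw [c5, c3] at IH1
      -- nonnegativity
      have hMk : 0 < ZExit Y ((a:ℤ) - 1, (b:ℤ)) k :=
        ZExit_pos Y hY _ k (by simp; try omega) (by simp) (by simp; try omega)
      have hMl : 0 < ZExit Y ((a:ℤ) - 1, (b:ℤ)) l :=
        ZExit_pos Y hY _ l (by simp; try omega) (by simp) (by simp; try omega)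
      have hPk : 0 ≤ ZExit Y ((a:ℤ), (b:ℤ) - 1) k := ZExit_nonneg Y hY _ _
      have hQl : 0 ≤ ZExit Y ((a:ℤ) - 1 - 1, (b:ℤ) + 1) l := ZExit_nonneg Y hY _ _
      have hQk : 0 ≤ ZExit Y ((a:ℤ) - 1 - 1, (b:ℤ) + 1) k := ZExit_nonneg Y hY _ _
      have hPl : 0 ≤ ZExit Y ((a:ℤ), (b:ℤ) - 1) l := ZExit_nonneg Y hY _ _
      -- hMQ : M_l * Q_k ≤ M_k * Q_l ; hPQ : P_l * Q_k ≤ P_k * Q_l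
      have hMQ : ZExit Y ((a:ℤ) - 1, (b:ℤ)) l * ZExit Y ((a:ℤ) - 1 - 1, (b:ℤ) + 1) k
          ≤ ZExit Y ((a:ℤ) - 1, (b:ℤ)) k * ZExit Y ((a:ℤ) - 1 - 1, (b:ℤ) + 1) l := by
        by_cases hka2 : k + 1 ≤ a - 1
        · have IH2 := ih (a-1) b k l (by omega) hlk hka2
          rw [c1] at IH2
          exact IH2
        · have hz : ZExit Y ((a:ℤ) - 1 - 1, (b:ℤ) + 1) k = 0 :=
            ZExit_eq_zero Y _ k (by simp; try omega) (by simp; try omega) (by simp; try omega)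
          rw [hz, mul_zero]
          exact mul_nonneg hMk.le hQl
      have hPQ : ZExit Y ((a:ℤ), (b:ℤ) - 1) l * ZExit Y ((a:ℤ) - 1 - 1, (b:ℤ) + 1) k
          ≤ ZExit Y ((a:ℤ), (b:ℤ) - 1) k * ZExit Y ((a:ℤ) - 1 - 1, (b:ℤ) + 1) l := by
        by_cases hka2 : k + 1 ≤ a - 1
        · have IH2 := ih (a-1) b k l (by omega) hlk hka2
          rw [c1] at IH2
          have hprod := mul_le_mul IH1 IH2
            (mul_nonneg hMl.le hQk) (mul_nonneg hPk hMl.le)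
          have hpos : 0 < ZExit Y ((a:ℤ) - 1, (b:ℤ)) k * ZExit Y ((a:ℤ) - 1, (b:ℤ)) l :=
            mul_pos hMk hMl
          apply le_of_mul_le_mul_right _ hpos
          nlinarith [hprod]
        · have hz : ZExit Y ((a:ℤ) - 1 - 1, (b:ℤ) + 1) k = 0 :=
            ZExit_eq_zero Y _ k (by simp; try omega) (by simp; try omega) (by simp; try omega)
          rw [hz, mul_zero]
          exact mul_nonneg hPk hQl
      rw [hrpl, hrpk, hrql, hrqk]
      have hYp := (hY ((a:ℤ), (b:ℤ))).le
      have hYq := (hY ((a:ℤ) - 1, (b:ℤ) + 1)).le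
      nlinarith [IH1, hMQ, hPQ, mul_nonneg hYp hYq,
        mul_le_mul_of_nonneg_left (add_le_add (add_le_add hMQ hPQ) IH1) (mul_nonneg hYp hYq)]
end


end Aux

/-- Monotonicity of ratios of restricted partition functions in the exit-time cutoff. -/
theorem stmt5 (Y : ℤ × ℤ → ℝ) (hY : ∀ z, 0 < Y z) (z : ℤ × ℤ) (k l : ℕ)
    (hlk : l ≤ k) (hk : (k : ℤ) ≤ z.1 - 1) (hz : 1 ≤ z.2) :
    ZExit Y z l / ZExit Y (z - (1, 0)) l ≤ ZExit Y z k / ZExit Y (z - (1, 0)) k ∧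
    ZExit Y z k / ZExit Y (z - (0, 1)) k ≤ ZExit Y z l / ZExit Y (z - (0, 1)) l := by
  obtain ⟨a, ha⟩ : ∃ a : ℕ, z.1 = (a : ℤ) := ⟨z.1.toNat, by omega⟩
  obtain ⟨b, hb⟩ : ∃ b : ℕ, z.2 = (b : ℤ) := ⟨z.2.toNat, by omega⟩
  have hka : k + 1 ≤ a := by omega
  have hb1 : 1 ≤ b := by omega
  have hz' : z = ((a : ℤ), (b : ℤ)) := Prod.ext ha hb
  have hsub1 : ((a : ℤ), (b : ℤ)) - (1, 0) = ((a : ℤ) - 1, (b : ℤ)) := by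
    simp [Prod.ext_iff]
  have hsub2 : ((a : ℤ), (b : ℤ)) - (0, 1) = ((a : ℤ), (b : ℤ) - 1) := by
    simp [Prod.ext_iff]
  rw [hz', hsub1, hsub2]
  have c1 : ((a - 1 : ℕ) : ℤ) = (a : ℤ) - 1 := by omega
  have c3 : ((b - 1 : ℕ) : ℤ) = (b : ℤ) - 1 := by omega
  have c5 : ((b - 1 : ℕ) : ℤ) + 1 = (b : ℤ) := by omega
  -- core inequality: C_l * B_k ≤ C_k * B_l
  have hcore := core Y hY (a + b) a (b - 1) k l (by omega) hlk hka
  rw [c5, c3] at hcore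
  -- recursions
  have hrl := ZExit_rec Y a b l (by omega) (by omega) (by omega)
  have hrk := ZExit_rec Y a b k (by omega) (by omega) (by omega)
  -- positivity
  have hBl : 0 < ZExit Y ((a:ℤ) - 1, (b:ℤ)) l :=
    ZExit_pos Y hY _ l (by simp; try omega) (by simp) (by simp; try omega)
  have hBk : 0 < ZExit Y ((a:ℤ) - 1, (b:ℤ)) k :=
    ZExit_pos Y hY _ k (by simp; try omega) (by simp) (by simp; try omega)
  have hCl : 0 < ZExit Y ((a:ℤ), (b:ℤ) - 1) l :=
    ZExit_pos Y hY _ l (by simp) (by simp; try omega) (by simp; try omega)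
  have hCk : 0 < ZExit Y ((a:ℤ), (b:ℤ) - 1) k :=
    ZExit_pos Y hY _ k (by simp) (by simp; try omega) (by simp; try omega)
  have key := mul_le_mul_of_nonneg_left hcore (hY ((a:ℤ), (b:ℤ))).le
  constructor
  · rw [div_le_div_iff₀ hBl hBk, hrl, hrk]
    nlinarith [key]
  · rw [div_le_div_iff₀ hCk hCl, hrl, hrk]
    nlinarith [key]
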